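/- For an odd prime power q, the clique number of the Paley graph P(q²) equals q. -/

import Mathlib

/-- For an odd prime power `q`, the clique number of the Paley graph `P(q²)` equals `q`:
there is a clique of size `q`, and every clique has size at most `q`. -/
theorem paley_clique_number (q : ℕ) (hq : IsPrimePow q) (hodd : Odd q)
    (F : Type*) [Field F] [Fintype F] [DecidableEq F] (hF : Fintype.card F = q ^ 2)
    (G : SimpleGraph F) [DecidableRel G.Adj]
    (hG : ∀ x y : F, G.Adj x y ↔ x ≠ y ∧ IsSquare (x - y)) :
    (∃ S : Finset F, G.IsNClique q S) ∧
      ∀ (n : ℕ) (S : Finset F), G.IsNClique n S → n ≤ q := by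
  classical
  obtain ⟨p, k, hp, hk, rfl⟩ := hq
  set q := p ^ k with hqdef
  have hp' : p.Prime := hp.nat_prime
  have hq1 : 1 ≤ q := Nat.one_le_pow _ _ hp'.pos
  -- characteristic
  have hchar : CharP F p := by
    obtain ⟨n, hrp, hcard⟩ := FiniteField.card F (ringChar F)
    have hdvd : p ∣ ringChar F ^ (n : ℕ) := by
      rw [← hcard, hF, hqdef, ← pow_mul]
      exact dvd_pow_self p (by positivity)
    have := (Nat.prime_dvd_prime_iff_eq hp' hrp).mp (hp'.dvd_of_dvd_pow hdvd)
    rw [this]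
    exact ringChar.charP F
  have hp2 : p ≠ 2 := by
    rintro rfl
    rw [Nat.odd_iff] at hodd
    have h2 : (2:ℕ) ∣ q := hqdef ▸ dvd_pow_self 2 (by omega)
    omega
  have hrc : ringChar F ≠ 2 := by
    have := ringChar.eq F p
    omega
  -- q odd, write q = 2t+1
  obtain ⟨t, ht⟩ := hodd
  -- squares criterion
  have hsq : ∀ a : F, a ≠ 0 → a ^ q = a → IsSquare a := by
    intro a ha haq
    rw [FiniteField.isSquare_iff hrc ha]
    have hq1' : a ^ (q - 1) = 1 := by
      have : a ^ (q - 1) * a = 1 * a := by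
        rw [one_mul, ← pow_succ]
        rw [Nat.sub_add_cancel hq1]
        exact haq
      exact mul_right_cancel₀ ha this
    have hdiv : Fintype.card F / 2 = (q - 1) * (t + 1) := by
      rw [hF]
      obtain ⟨u, hu⟩ : ∃ u, t * t = u := ⟨_, rfl⟩
      have h1 : q ^ 2 = 4 * u + 4 * t + 1 := by
        rw [ht, ← hu]; ring
      have h2 : (q - 1) * (t + 1) = 2 * u + 2 * t := by
        rw [show q - 1 = 2 * t by omega, ← hu]; ring
      omega
    rw [hdiv, pow_mul, hq1', one_pow]
  constructor
  · -- lower bound: the subfield {x | x^q = x} is a clique of size q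
    have hq3 : 2 ≤ q := (hp'.two_le).trans (Nat.le_self_pow (by omega) p)
    have hqm1 : 0 < q - 1 := by omega
    -- primitive root of order q - 1
    obtain ⟨g, hg⟩ := IsCyclic.exists_generator (α := Fˣ)
    have hordg : orderOf g = q ^ 2 - 1 := by
      rw [orderOf_eq_card_of_forall_mem_zpowers hg, Nat.card_eq_fintype_card, Fintype.card_units, hF]
    have hfact : q ^ 2 - 1 = (q + 1) * (q - 1) := by
      simpa using Nat.sq_sub_sq q 1
    have hdvd : (q + 1) ∣ orderOf g := by
      rw [hordg, hfact]
      exact Dvd.intro _ rfl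
    have hordζ : orderOf ((g ^ (q + 1) : Fˣ) : F) = q - 1 := by
      rw [orderOf_units, orderOf_pow_of_dvd (by omega) hdvd, hordg, hfact]
      exact Nat.mul_div_cancel_left _ (by omega)
    have hprim : IsPrimitiveRoot ((g ^ (q + 1) : Fˣ) : F) (q - 1) := by
      rw [← hordζ]; exact IsPrimitiveRoot.orderOf _
    set T := Polynomial.nthRootsFinset (q - 1) (1 : F) with hT
    have hcardT : T.card = q - 1 := hprim.card_nthRootsFinset
    have h0T : (0 : F) ∉ T := fun h => Polynomial.ne_zero_of_mem_nthRootsFinset one_ne_zero h rfl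
    refine ⟨insert 0 T, ?_, ?_⟩
    · -- clique
      have key : ∀ x ∈ insert (0:F) T, x ^ q = x := by
        intro x hx
        rcases Finset.mem_insert.mp hx with rfl | hx
        · exact zero_pow (by omega)
        · have := (Polynomial.mem_nthRootsFinset hqm1 (1 : F)).mp hx
          calc x ^ q = x ^ (q - 1) * x := by rw [← pow_succ, Nat.sub_add_cancel hq1]
          _ = x := by rw [this, one_mul]
      intro x hx y hy hxy
      rw [hG]
      refine ⟨hxy, hsq _ (sub_ne_zero.2 hxy) ?_⟩
      haveI := Fact.mk hp'
      haveI := hchar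
      have : (x - y) ^ q = x ^ q - y ^ q := by
        rw [hqdef]
        exact sub_pow_char_pow x y k
      rw [this, key x hx, key y hy]
    · rw [Finset.card_insert_of_notMem h0T, hcardT]
      omega
  · -- upper bound
    intro n S hS
    obtain ⟨ν, hν⟩ := FiniteField.exists_nonsquare hrc
    have hν0 : ν ≠ 0 := by rintro rfl; exact hν (by simp)
    set I := S.image (fun x => ν * x) with hI
    have hcardI : I.card = n := by
      rw [hI, Finset.card_image_of_injective _ (mul_right_injective₀ hν0), hS.2]
    -- differences of clique elements are nonzero squares
    have hcl : ∀ a ∈ S, ∀ b ∈ S, a ≠ b → IsSquare (a - b) := by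
      intro a ha b hb hab
      exact ((hG a b).mp (hS.1 ha hb hab)).2
    have hinj : Set.InjOn (fun z : F × F => z.1 - z.2) ↑(S ×ˢ I) := by
      rintro ⟨a, b⟩ hab ⟨c, d⟩ hcd h
      simp only [Finset.coe_product, Set.mem_prod, Finset.mem_coe] at hab hcd
      simp only at h
      by_contra hne
      have hac : a ≠ c := by
        rintro rfl
        have hbd : b = d := sub_right_injective h
        exact hne (by rw [hbd])
      have hbd : b ≠ d := by
        rintro rfl
        exact hac (sub_left_injective h)
      obtain ⟨x, hxS, hx⟩ := Finset.mem_image.mp hab.2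
      obtain ⟨y, hyS, hy⟩ := Finset.mem_image.mp hcd.2
      have hxy : x ≠ y := by rintro rfl; exact hbd (hx ▸ hy ▸ rfl)
      obtain ⟨u, hu⟩ := hcl x hxS y hyS hxy
      obtain ⟨v, hv⟩ := hcl a hab.1 c hcd.1 hac
      have hu0 : u ≠ 0 := by
        rintro rfl
        rw [mul_zero] at hu
        exact hxy (sub_eq_zero.mp hu)
      have hbd' : b - d = ν * (u * u) := by
        rw [← hx, ← hy, ← hu]; ring
      have hac' : a - c = b - d := by linear_combination h
      apply hν
      have key : v * v = ν * (u * u) := by rw [← hv, hac', hbd']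
      refine ⟨v / u, ?_⟩
      field_simp
      linear_combination -key
    have hle : (S ×ˢ I).card ≤ Fintype.card F := by
      calc (S ×ˢ I).card = ((S ×ˢ I).image (fun z : F × F => z.1 - z.2)).card :=
            (Finset.card_image_of_injOn hinj).symm
        _ ≤ Fintype.card F := Finset.card_le_card (Finset.subset_univ _) |>.trans_eq (Finset.card_univ)
    rw [Finset.card_product, hS.2, hcardI, hF, pow_two] at hle
    exact Nat.mul_self_le_mul_self_iff.mp hle
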